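/- Let φ : E(H) → E(H) be a bijection such that E ≤ F ⟺ φ(E) ≤ φ(F) for all effects E, F. Then φ maps the set of projections bijectively onto itself. -/

import Mathlib

open scoped InnerProductSpace

/-- An effect: a positive operator majorized by the identity (Loewner order). -/
def IsEffect {H : Type} [NormedAddCommGroup H] [InnerProductSpace ℂ H] [CompleteSpace H]
    (E : H →L[ℂ] H) : Prop := 0 ≤ E ∧ E ≤ 1

/-- An orthogonal projection: a self-adjoint idempotent operator. -/
def IsOrthogonalProjection {H : Type} [NormedAddCommGroup H] [InnerProductSpace ℂ H]
    [CompleteSpace H] (P : H →L[ℂ] H) : Prop := IsIdempotentElem P ∧ IsSelfAdjoint P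

section Aux

variable {H : Type} [NormedAddCommGroup H] [InnerProductSpace ℂ H] [CompleteSpace H]

/-- Order-theoretic property of an effect `A`: every effect `D` above `A` is the least upper
bound of `A` and some effect `C` whose only common lower bound with `A` (among effects) is `0`.
Projections satisfy it (take `C = D - P`), and conversely any effect satisfying it is a
projection. It is invariant under order automorphisms of the effect algebra. -/
def RelCompl (A : H →L[ℂ] H) : Prop :=
  ∀ D, IsEffect D → A ≤ D → ∃ C, IsEffect C ∧
    (∀ E, IsEffect E → E ≤ A → E ≤ C → E = 0) ∧ C ≤ D ∧
    ∀ E, IsEffect E → A ≤ E → C ≤ E → D ≤ E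

lemma exists_sqrt {a : H →L[ℂ] H} (ha : 0 ≤ a) :
    ∃ s : H →L[ℂ] H, 0 ≤ s ∧ s * s = a := by
  have hsa : IsSelfAdjoint a := IsSelfAdjoint.of_nonneg ha
  refine ⟨cfc Real.sqrt a, cfc_nonneg fun x _ => Real.sqrt_nonneg x, ?_⟩
  rw [← cfc_mul Real.sqrt Real.sqrt a]
  have h1 : cfc (fun x : ℝ => Real.sqrt x * Real.sqrt x) a = cfc (id : ℝ → ℝ) a := by
    apply cfc_congr
    intro x hx
    exact Real.mul_self_sqrt (spectrum_nonneg_of_nonneg ha hx)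
  rw [h1, cfc_id ℝ a]

lemma sandwich_zero {a p : H →L[ℂ] H} (ha : 0 ≤ a) (hp : star p = p)
    (h : p * a * p = 0) : a * p = 0 ∧ p * a = 0 := by
  obtain ⟨s, hs0, hs⟩ := exists_sqrt ha
  have hssa : star s = s := (IsSelfAdjoint.of_nonneg hs0).star_eq
  have hx : star (s * p) * (s * p) = 0 := by
    rw [star_mul, hssa, hp]
    calc p * s * (s * p) = p * (s * s) * p := by noncomm_ring
      _ = p * a * p := by rw [hs]
      _ = 0 := h
  have hx0 : s * p = 0 := (CStarRing.star_mul_self_eq_zero_iff _).mp hx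
  have hap : a * p = 0 := by
    calc a * p = s * (s * p) := by rw [← mul_assoc, hs]
      _ = 0 := by rw [hx0, mul_zero]
  refine ⟨hap, ?_⟩
  have hstar : star (a * p) = p * a := by
    rw [star_mul, hp, (IsSelfAdjoint.of_nonneg ha).star_eq]
  rw [← hstar, hap, star_zero]

lemma proj_isEffect {P : H →L[ℂ] H} (hP : IsOrthogonalProjection P) : IsEffect P := by
  obtain ⟨hidem, hsa⟩ := hP
  constructor
  · have h : P = star P * P := by rw [hsa.star_eq, hidem.eq]
    rw [h]; exact star_mul_self_nonneg P
  · rw [← sub_nonneg]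
    have h : 1 - P = star (1 - P) * (1 - P) := by
      rw [star_sub, star_one, hsa.star_eq]
      calc 1 - P = 1 - P - P + P := by abel
        _ = 1 - P - P + P * P := by rw [hidem.eq]
        _ = (1 - P) * (1 - P) := by noncomm_ring
    rw [h]; exact star_mul_self_nonneg (1 - P)

lemma proj_compress {P E : H →L[ℂ] H} (hP : IsOrthogonalProjection P)
    (hE1 : E ≤ 1) (hPE : P ≤ E) : P * E * P = P := by
  obtain ⟨hidem, hsa⟩ := hP
  have hPPP : P * P * P = P := by rw [hidem.eq, hidem.eq]
  have h1 : P * P * P ≤ P * E * P := by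
    have := star_left_conjugate_le_conjugate hPE P
    rwa [hsa.star_eq] at this
  have h2 : P * E * P ≤ P * 1 * P := by
    have := star_left_conjugate_le_conjugate hE1 P
    rwa [hsa.star_eq] at this
  rw [hPPP] at h1
  rw [mul_one, hidem.eq] at h2
  exact le_antisymm h2 h1

lemma proj_relCompl {P : H →L[ℂ] H} (hP : IsOrthogonalProjection P) : RelCompl P := by
  obtain ⟨hidem, hsa⟩ := hP
  have hPeff : IsEffect P := proj_isEffect ⟨hidem, hsa⟩
  intro D hD hPD
  set C : H →L[ℂ] H := D - P with hCdef
  have hC0 : 0 ≤ C := sub_nonneg.mpr hPD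
  have hCD : C ≤ D := sub_le_self D hPeff.1
  have hC1 : C ≤ 1 := le_trans hCD hD.2
  have hPPP : P * P * P = P := by rw [hidem.eq, hidem.eq]
  have hPDP : P * D * P = P := proj_compress ⟨hidem, hsa⟩ hD.2 hPD
  have hPCP : P * C * P = 0 := by
    rw [hCdef, mul_sub, sub_mul, hPDP, hPPP, sub_self]
  have hCP : C * P = 0 ∧ P * C = 0 := sandwich_zero hC0 hsa.star_eq hPCP
  have hq : star (1 - P) = 1 - P := by rw [star_sub, star_one, hsa.star_eq]
  refine ⟨C, ⟨hC0, hC1⟩, ?_, hCD, ?_⟩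
  · -- only common lower bound of P and C is 0
    intro E hE hEP hEC
    have hqPq : (1 - P) * P * (1 - P) = 0 := by
      have h' : (1 - P) * P = 0 := by rw [sub_mul, one_mul, hidem.eq, sub_self]
      rw [h', zero_mul]
    have h1 : (1 - P) * E * (1 - P) ≤ 0 := by
      have := star_left_conjugate_le_conjugate hEP (1 - P)
      rwa [hq, hqPq] at this
    have h2 : 0 ≤ (1 - P) * E * (1 - P) := by
      have := star_left_conjugate_nonneg hE.1 (1 - P)
      rwa [hq] at this
    have hqEq : (1 - P) * E * (1 - P) = 0 := le_antisymm h1 h2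
    have hEq := sandwich_zero hE.1 hq hqEq
    have e1 : E * P = E := by
      have h' := hEq.1
      rw [mul_sub, mul_one, sub_eq_zero] at h'
      exact h'.symm
    have e2 : P * E = E := by
      have h' := hEq.2
      rw [sub_mul, one_mul, sub_eq_zero] at h'
      exact h'.symm
    have hEPE : P * E * P = E := by rw [mul_assoc, e1, e2]
    have h3 : E ≤ 0 := by
      have h4 := star_left_conjugate_le_conjugate hEC P
      rw [hsa.star_eq, hPCP, hEPE] at h4
      exact h4
    exact le_antisymm h3 hE.1
  · -- least upper bound property
    intro E hE hPE hCE
    have hPEP : P * E * P = P := proj_compress ⟨hidem, hsa⟩ hE.2 hPE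
    have h1mE : 0 ≤ 1 - E := sub_nonneg.mpr hE.2
    have hP1EP : P * (1 - E) * P = 0 := by
      rw [mul_sub, sub_mul, mul_one, hidem.eq, hPEP, sub_self]
    have h1EP := sandwich_zero h1mE hsa.star_eq hP1EP
    have hEPeq : E * P = P := by
      have h' := h1EP.1
      rw [sub_mul, one_mul, sub_eq_zero] at h'
      exact h'.symm
    have hPEeq : P * E = P := by
      have h' := h1EP.2
      rw [mul_sub, mul_one, sub_eq_zero] at h'
      exact h'.symm
    have hEdecomp : (1 - P) * E * (1 - P) = E - P := by
      rw [sub_mul, one_mul, hPEeq, mul_sub, mul_one, sub_mul, hEPeq, hidem.eq]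
      abel
    have hCdecomp : (1 - P) * C * (1 - P) = C := by
      rw [sub_mul, one_mul, hCP.2, sub_zero, mul_sub, mul_one, hCP.1, sub_zero]
    have hkey : (1 - P) * C * (1 - P) ≤ (1 - P) * E * (1 - P) := by
      have := star_left_conjugate_le_conjugate hCE (1 - P)
      rwa [hq] at this
    rw [hCdecomp, hEdecomp] at hkey
    -- C ≤ E - P, so D = P + C ≤ E
    have : D - P ≤ E - P := hkey
    calc D = P + (D - P) := by abel
      _ ≤ P + (E - P) := add_le_add_right this P
      _ = E := by abel


lemma half_smul_nonneg {X : H →L[ℂ] H} (hX : 0 ≤ X) : 0 ≤ (2⁻¹ : ℂ) • X := by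
  obtain ⟨s, hs0, hs⟩ := exists_sqrt hX
  have hssa : star s = s := (IsSelfAdjoint.of_nonneg hs0).star_eq
  set c : ℂ := ((Real.sqrt 2⁻¹ : ℝ) : ℂ) with hc
  have hcc : c * c = (2⁻¹ : ℂ) := by
    rw [hc, ← Complex.ofReal_mul, Real.mul_self_sqrt (by norm_num)]
    norm_num
  have key : star (c • s) * (c • s) = (2⁻¹ : ℂ) • X := by
    have hstarc : star c = c := by rw [hc, Complex.star_def, Complex.conj_ofReal]
    rw [star_smul, hssa, smul_mul_smul_comm, hs, hstarc, hcc]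
  rw [← key]
  exact star_mul_self_nonneg _

lemma effect_spectrum_mem {A : H →L[ℂ] H} (hA : IsEffect A) :
    ∀ x ∈ spectrum ℝ A, 0 ≤ x ∧ x ≤ 1 := by
  have hsa : IsSelfAdjoint A := IsSelfAdjoint.of_nonneg hA.1
  intro x hx
  refine ⟨spectrum_nonneg_of_nonneg hA.1 hx, ?_⟩
  have h1 : A ≤ algebraMap ℝ (H →L[ℂ] H) 1 := by
    rw [map_one]; exact hA.2
  exact (le_algebraMap_iff_spectrum_le (r := (1:ℝ)) (a := A) hsa).mp h1 x hx

lemma relCompl_proj {A : H →L[ℂ] H} (hA : IsEffect A) (h : RelCompl A) :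
    IsOrthogonalProjection A := by
  have hsa : IsSelfAdjoint A := IsSelfAdjoint.of_nonneg hA.1
  have hspec := effect_spectrum_mem hA
  set f : ℝ → ℝ := fun t => min (2 * t) ((1 + t) / 2) with hf
  have hfc : Continuous f := (continuous_const.mul continuous_id).min
    ((continuous_const.add continuous_id).div_const 2)
  set D : H →L[ℂ] H := cfc f A with hD
  have hAD : A ≤ D := by
    have h1 : cfc (id : ℝ → ℝ) A ≤ cfc f A := by
      rw [cfc_le_iff (id : ℝ → ℝ) f A continuousOn_id hfc.continuousOn hsa]
      intro x hx
      obtain ⟨h0, h1⟩ := hspec x hx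
      simp only [id_eq]
      exact le_min (by linarith) (by linarith)
    rwa [cfc_id ℝ A] at h1
  have hD0 : 0 ≤ D := cfc_nonneg fun x hx => by
    obtain ⟨h0, h1⟩ := hspec x hx
    exact le_min (by linarith) (by linarith)
  have hD1 : D ≤ 1 := by
    have h1 : cfc f A ≤ cfc (fun _ : ℝ => (1:ℝ)) A := by
      rw [cfc_le_iff f _ A hfc.continuousOn continuousOn_const hsa]
      intro x hx
      obtain ⟨h0, h1⟩ := hspec x hx
      exact min_le_of_right_le (by linarith)
    rwa [cfc_const (1:ℝ) A hsa, map_one] at h1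
  have hD2 : D ≤ A + A := by
    have h1 : cfc f A ≤ cfc (fun t : ℝ => t + t) A := by
      rw [cfc_le_iff f (fun t : ℝ => t + t) A hfc.continuousOn (by fun_prop) hsa]
      intro x hx
      exact min_le_of_left_le (by linarith)
    have h2 : cfc (fun t : ℝ => t + t) A = A + A := by
      have h3 := cfc_add (R := ℝ) (a := A) (fun x : ℝ => x) (fun x : ℝ => x)
        (by fun_prop) (by fun_prop)
      rw [cfc_id' ℝ A] at h3
      exact h3
    rwa [h2] at h1
  obtain ⟨C, hCeff, hinf, hCD, hlub⟩ := h D ⟨hD0, hD1⟩ hAD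
  -- half of C is a common lower bound of A and C; hence C = 0
  set E : H →L[ℂ] H := (2⁻¹ : ℂ) • C with hE
  have hEE : E + E = C := by
    rw [hE, ← add_smul]
    norm_num
  have hE0 : 0 ≤ E := half_smul_nonneg hCeff.1
  have hEC : E ≤ C := by
    have : C - E = E := by rw [← hEE]; abel
    rw [← sub_nonneg, this]; exact hE0
  have hEA : E ≤ A := by
    have h1 : 0 ≤ A + A - C := sub_nonneg.mpr (le_trans hCD hD2)
    have h2 : (2⁻¹ : ℂ) • (A + A - C) = A - E := by
      rw [smul_sub, smul_add, ← hE]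
      have : (2⁻¹ : ℂ) • A + (2⁻¹ : ℂ) • A = A := by rw [← add_smul]; norm_num
      rw [this]
    have := half_smul_nonneg h1
    rw [h2] at this
    exact sub_nonneg.mp this
  have hE1 : E ≤ 1 := le_trans hEC hCeff.2
  have hEzero : E = 0 := hinf E ⟨hE0, hE1⟩ hEA hEC
  have hCzero : C = 0 := by rw [← hEE, hEzero, add_zero]
  have hDA : D ≤ A := hlub A hA le_rfl (by rw [hCzero]; exact hA.1)
  have hDeqA : cfc f A = cfc (id : ℝ → ℝ) A := by
    rw [cfc_id ℝ A]; exact le_antisymm hDA hAD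
  have heq : (spectrum ℝ A).EqOn f id :=
    eqOn_of_cfc_eq_cfc hDeqA hfc.continuousOn continuousOn_id hsa
  have hspec01 : ∀ x ∈ spectrum ℝ A, x = 0 ∨ x = 1 := by
    intro x hx
    have := heq hx
    simp only [hf, id] at this
    rcases min_cases (2 * x) ((1 + x) / 2) with ⟨hmin, _⟩ | ⟨hmin, _⟩ <;>
      rw [hmin] at this
    · left; linarith
    · right; linarith
  refine ⟨?_, hsa⟩
  show A * A = A
  have h1 : cfc (fun x : ℝ => x * x) A = cfc (id : ℝ → ℝ) A := by
    apply cfc_congr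
    intro x hx
    rcases hspec01 x hx with h | h <;> simp [h]
  rw [← cfc_id ℝ A, ← cfc_mul (id : ℝ → ℝ) (id : ℝ → ℝ) A continuousOn_id continuousOn_id]
  exact h1


lemma zero_isEffect : IsEffect (0 : H →L[ℂ] H) := by
  refine ⟨le_rfl, ?_⟩
  have h : (0 : H →L[ℂ] H) ≤ star (1 : H →L[ℂ] H) * 1 := star_mul_self_nonneg _
  rwa [star_one, one_mul] at h

section Transfer
variable (φ : (H →L[ℂ] H) → (H →L[ℂ] H))
  (hbij : Set.BijOn φ {E | IsEffect E} {E | IsEffect E})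
  (horder : ∀ E F : H →L[ℂ] H, IsEffect E → IsEffect F → (E ≤ F ↔ φ E ≤ φ F))

include hbij horder in
lemma phi_zero : φ 0 = 0 := by
  obtain ⟨Z, hZeff, hφZ⟩ := hbij.2.2 (zero_isEffect (H := H))
  have h1 : φ 0 ≤ φ Z := (horder 0 Z zero_isEffect hZeff).mp hZeff.1
  rw [hφZ] at h1
  exact le_antisymm h1 (hbij.1 zero_isEffect).1

include hbij horder in
lemma relCompl_transfer {A : H →L[ℂ] H} (hA : IsEffect A) :
    RelCompl A ↔ RelCompl (φ A) := by
  have hφA : IsEffect (φ A) := hbij.1 hA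
  have hzero := phi_zero φ hbij horder
  constructor
  · intro h D' hD' hle'
    obtain ⟨D, hD, hφD⟩ := hbij.2.2 hD'
    have hAD : A ≤ D := by
      rw [horder A D hA hD, hφD]; exact hle'
    obtain ⟨C, hC, hinf, hCD, hlub⟩ := h D hD hAD
    refine ⟨φ C, hbij.1 hC, ?_, ?_, ?_⟩
    · intro E' hE' h1 h2
      obtain ⟨E, hE, hφE⟩ := hbij.2.2 hE'
      have hEA : E ≤ A := by rw [horder E A hE hA, hφE]; exact h1
      have hEC : E ≤ C := by rw [horder E C hE hC, hφE]; exact h2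
      have : E = 0 := hinf E hE hEA hEC
      rw [← hφE, this, hzero]
    · rw [← hφD]; exact (horder C D hC hD).mp hCD
    · intro E' hE' h1 h2
      obtain ⟨E, hE, hφE⟩ := hbij.2.2 hE'
      have hAE : A ≤ E := by rw [horder A E hA hE, hφE]; exact h1
      have hCE : C ≤ E := by rw [horder C E hC hE, hφE]; exact h2
      have := hlub E hE hAE hCE
      rw [← hφD, ← hφE]
      exact (horder D E hD hE).mp this
  · intro h D hD hAD
    obtain ⟨C', hC', hinf, hCD', hlub⟩ := h (φ D) (hbij.1 hD) ((horder A D hA hD).mp hAD)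
    obtain ⟨C, hC, hφC⟩ := hbij.2.2 hC'
    refine ⟨C, hC, ?_, ?_, ?_⟩
    · intro E hE h1 h2
      have h1' : φ E ≤ φ A := (horder E A hE hA).mp h1
      have h2' : φ E ≤ C' := by rw [← hφC]; exact (horder E C hE hC).mp h2
      have h3 : φ E = 0 := hinf (φ E) (hbij.1 hE) h1' h2'
      rw [← hzero] at h3
      exact hbij.2.1 hE zero_isEffect h3
    · rw [horder C D hC hD, hφC]; exact hCD'
    · intro E hE h1 h2
      have h1' : φ A ≤ φ E := (horder A E hA hE).mp h1
      have h2' : C' ≤ φ E := by rw [← hφC]; exact (horder C E hC hE).mp h2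
      have := hlub (φ E) (hbij.1 hE) h1' h2'
      rw [horder D E hD hE]
      exact this

end Transfer


end Aux

/-- an order automorphism of the effect algebra maps the set of
projections bijectively onto itself. -/
theorem orderAuto_bijOn_projections
    {H : Type} [NormedAddCommGroup H] [InnerProductSpace ℂ H] [CompleteSpace H]
    (φ : (H →L[ℂ] H) → (H →L[ℂ] H))
    (hbij : Set.BijOn φ {E | IsEffect E} {E | IsEffect E})
    (horder : ∀ E F : H →L[ℂ] H, IsEffect E → IsEffect F → (E ≤ F ↔ φ E ≤ φ F)) :
    Set.BijOn φ {P | IsOrthogonalProjection P} {P | IsOrthogonalProjection P} := by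
  refine ⟨?_, ?_, ?_⟩
  · -- MapsTo
    intro P hP
    have hPe : IsEffect P := proj_isEffect hP
    have h1 : RelCompl P := proj_relCompl hP
    have h2 : RelCompl (φ P) := (relCompl_transfer φ hbij horder hPe).mp h1
    exact relCompl_proj (hbij.1 hPe) h2
  · -- InjOn
    intro x hx y hy hxy
    exact hbij.2.1 (proj_isEffect hx) (proj_isEffect hy) hxy
  · -- SurjOn
    intro R hR
    have hRe : IsEffect R := proj_isEffect hR
    obtain ⟨A, hAe, hφA⟩ := hbij.2.2 hRe
    have h1 : RelCompl (φ A) := by rw [hφA]; exact proj_relCompl hR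
    have h2 : RelCompl A := (relCompl_transfer φ hbij horder hAe).mpr h1
    exact ⟨A, relCompl_proj hAe h2, hφA⟩
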